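/- Let n ≥ 2 and ω = e^(2πi/n). The lattice Λₙ = {l ∈ ℤⁿ : ∑_{k=0}^{n−1} lₖ ωᵏ = 0} is generated (as a ℤ-module) by the vectors v_{p,i} for primes p dividing n and 0 ≤ i < n/p, where v_{p,i} has a 1 in positions i, i + n/p, i + 2n/p, …, i + (p−1)n/p and 0 elsewhere. -/

import Mathlib

open Polynomial Finset

noncomputable def psi (n p : ℕ) : Polynomial ℤ := ∑ t ∈ Finset.range p, (X : Polynomial ℤ) ^ (t * (n / p))

lemma psi_mul_eq {n p : ℕ} (hp : p ∣ n) :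
    psi n p * ((X : Polynomial ℤ) ^ (n / p) - 1) = X ^ n - 1 := by
  have h := geom_sum_mul ((X : Polynomial ℤ) ^ (n / p)) p
  have : ∑ t ∈ Finset.range p, ((X : Polynomial ℤ) ^ (n / p)) ^ t = psi n p := by
    unfold psi
    refine Finset.sum_congr rfl fun t _ => ?_
    rw [← pow_mul, Nat.mul_comm]
  rw [this] at h
  rw [h, ← pow_mul, Nat.div_mul_cancel hp]

lemma X_pow_sub_one_ne_zero {m : ℕ} (hm : 0 < m) : ((X : Polynomial ℤ) ^ m - 1) ≠ 0 := by
  have : ((X : Polynomial ℤ) ^ m - 1) = X ^ m - C 1 := by simp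
  rw [this]
  exact (monic_X_pow_sub_C (1 : ℤ) hm.ne').ne_zero

lemma psi_eq_prod {n p : ℕ} (hn : 2 ≤ n) (hpp : p.Prime) (hp : p ∣ n) :
    psi n p = ∏ d ∈ n.divisors \ (n / p).divisors, cyclotomic d ℤ := by
  have hn0 : 0 < n := by omega
  have hm0 : 0 < n / p := Nat.div_pos (Nat.le_of_dvd hn0 hp) hpp.pos
  apply mul_right_cancel₀ (X_pow_sub_one_ne_zero hm0)
  rw [psi_mul_eq hp, ← prod_cyclotomic_eq_X_pow_sub_one hm0,
    ← prod_cyclotomic_eq_X_pow_sub_one hn0]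
  exact (Finset.prod_sdiff (Nat.divisors_subset_of_dvd hn0.ne' (Nat.div_dvd_of_dvd hp))).symm

noncomputable def hpoly (n p : ℕ) : Polynomial ℤ :=
  ∏ d ∈ (n.divisors \ (n / p).divisors).erase n, cyclotomic d ℤ

lemma n_mem_sdiff {n p : ℕ} (hn : 2 ≤ n) (hpp : p.Prime) (hp : p ∣ n) :
    n ∈ n.divisors \ (n / p).divisors := by
  have hn0 : 0 < n := by omega
  have hlt : n / p < n := Nat.div_lt_self hn0 hpp.one_lt
  rw [Finset.mem_sdiff, Nat.mem_divisors, Nat.mem_divisors]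
  refine ⟨⟨dvd_rfl, hn0.ne'⟩, fun h => ?_⟩
  have := Nat.le_of_dvd (Nat.div_pos (Nat.le_of_dvd hn0 hp) hpp.pos) h.1
  omega

lemma cyclotomic_mul_hpoly {n p : ℕ} (hn : 2 ≤ n) (hpp : p.Prime) (hp : p ∣ n)
    (hpsi : psi n p = ∏ d ∈ n.divisors \ (n / p).divisors, cyclotomic d ℤ) :
    cyclotomic n ℤ * hpoly n p = psi n p := by
  rw [hpsi, hpoly]; exact Finset.mul_prod_erase _ (fun d => cyclotomic d ℤ) (n_mem_sdiff hn hpp hp)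


lemma cyclotomic_mul_hpoly' {n p : ℕ} (hn : 2 ≤ n) (hpp : p.Prime) (hp : p ∣ n) :
    cyclotomic n ℤ * hpoly n p = psi n p :=
  cyclotomic_mul_hpoly hn hpp hp (psi_eq_prod hn hpp hp)

lemma d_facts {n p : ℕ} (hn : 2 ≤ n) (hpp : p.Prime) (hp : p ∣ n) {d : ℕ}
    (hd : d ∈ (n.divisors \ (n / p).divisors).erase n) :
    d ∣ n ∧ d ≠ n ∧ d.factorization p = n.factorization p := by
  have hn0 : 0 < n := by omega
  have hm0 : 0 < n / p := Nat.div_pos (Nat.le_of_dvd hn0 hp) hpp.pos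
  rw [Finset.mem_erase, Finset.mem_sdiff, Nat.mem_divisors, Nat.mem_divisors] at hd
  obtain ⟨hne, ⟨hdvd, -⟩, hnd⟩ := hd
  have hndvd : ¬ d ∣ (n / p) := fun h => hnd ⟨h, hm0.ne'⟩
  have hd0 : d ≠ 0 := by rintro rfl; exact hn0.ne' (Nat.eq_zero_of_zero_dvd hdvd)
  refine ⟨hdvd, hne, le_antisymm ((Nat.factorization_le_iff_dvd hd0 hn0.ne').2 hdvd p) ?_⟩
  by_contra hlt
  push_neg at hlt
  apply hndvd
  rw [← Nat.factorization_le_iff_dvd hd0 (by positivity : n / p ≠ 0)]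
  intro q
  rw [Nat.factorization_div hp, hpp.factorization]
  rcases eq_or_ne q p with rfl | hq
  · simp only [Finsupp.coe_tsub, Pi.sub_apply, Finsupp.single_eq_same]
    omega
  · simp only [Finsupp.coe_tsub, Pi.sub_apply, Finsupp.single_eq_of_ne' (Ne.symm hq)]
    have := (Nat.factorization_le_iff_dvd hd0 hn0.ne').2 hdvd q
    omega

lemma n_dvd_of {n : ℕ} (hn : 2 ≤ n) {D : ℕ} (hD0 : D ≠ 0)
    (h : ∀ q ∈ n.primeFactors, n.factorization q ≤ D.factorization q) : n ∣ D := by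
  rw [← Nat.factorization_le_iff_dvd (by omega) hD0]
  intro q
  by_cases hq : q ∈ n.primeFactors
  · exact h q hq
  · have : n.factorization q = 0 := by
      rwa [← Finsupp.notMem_support_iff, Nat.support_factorization]
    omega

lemma span_hpoly_eq_top {n : ℕ} (hn : 2 ≤ n) :
    Ideal.span ((fun p => hpoly n p) '' ↑n.primeFactors) = ⊤ := by
  by_contra hne
  obtain ⟨M, hM, hle⟩ := Ideal.exists_le_maximal _ hne
  haveI := hM
  haveI : M.IsPrime := hM.isPrime
  have hn0 : 0 < n := by omega
  set x : Polynomial ℤ ⧸ M := Ideal.Quotient.mk M X with hxdef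
  have haeval : ∀ Q : Polynomial ℤ, Polynomial.aeval x Q = Ideal.Quotient.mk M Q := by
    intro Q
    have : Polynomial.aeval x Q
        = Ideal.Quotient.mkₐ ℤ M (Polynomial.aeval X Q) := by
      rw [← Polynomial.aeval_algHom_apply]
      rfl
    rw [this, Polynomial.aeval_X_left_apply]
    rfl
  -- membership gives roots of cyclotomics
  have key : ∀ p : ℕ, ∃ dp : ℕ, p ∈ n.primeFactors →
      (dp ∣ n ∧ dp ≠ n ∧ dp.factorization p = n.factorization p) ∧
      (cyclotomic dp (Polynomial ℤ ⧸ M)).IsRoot x := by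
    intro p
    by_cases hp : p ∈ n.primeFactors
    · have hpp : p.Prime := Nat.prime_of_mem_primeFactors hp
      have hpdvd : p ∣ n := Nat.dvd_of_mem_primeFactors hp
      have hmem : hpoly n p ∈ M := hle (Ideal.subset_span ⟨p, Finset.mem_coe.2 hp, rfl⟩)
      have h0 : Polynomial.aeval x (hpoly n p) = 0 := by
        rw [haeval]
        exact Ideal.Quotient.eq_zero_iff_mem.2 hmem
      rw [hpoly, map_prod] at h0
      obtain ⟨d, hdmem, hd0⟩ := Finset.prod_eq_zero_iff.1 h0
      refine ⟨d, fun _ => ⟨d_facts hn hpp hpdvd hdmem, ?_⟩⟩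
      rwa [Polynomial.aeval_def, ← Polynomial.eval_map, Polynomial.map_cyclotomic] at hd0
    · exact ⟨0, fun h => absurd h hp⟩
  choose d hd using key
  have hnonempty : n.primeFactors.Nonempty := Nat.nonempty_primeFactors.2 (by omega)
  obtain ⟨p₀, hp₀⟩ := hnonempty
  have hdvd : ∀ p ∈ n.primeFactors, d p ∣ n := fun p hp => ((hd p hp).1).1
  have hdne : ∀ p ∈ n.primeFactors, d p ≠ n := fun p hp => ((hd p hp).1).2.1
  have hdfact : ∀ p ∈ n.primeFactors, (d p).factorization p = n.factorization p :=
    fun p hp => ((hd p hp).1).2.2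
  have hdne0 : ∀ p ∈ n.primeFactors, d p ≠ 0 := by
    intro p hp h
    exact hn0.ne' (Nat.eq_zero_of_zero_dvd (h ▸ hdvd p hp))
  haveI : CharP (Polynomial ℤ ⧸ M) (ringChar (Polynomial ℤ ⧸ M)) := ringChar.charP _
  rcases CharP.char_is_prime_or_zero (Polynomial ℤ ⧸ M) (ringChar (Polynomial ℤ ⧸ M)) with hℓ | hc0
  · -- positive characteristic ℓ
    generalize hℓdef : ringChar (Polynomial ℤ ⧸ M) = ℓ at *
    haveI : Fact ℓ.Prime := ⟨hℓ⟩
    -- pass to ord_compl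
    have hroot' : ∀ p ∈ n.primeFactors, IsPrimitiveRoot x (ordCompl[ℓ] (d p)) := by
      intro p hp
      have hcne0 : ordCompl[ℓ] (d p) ≠ 0 := (Nat.ordCompl_pos ℓ (hdne0 p hp)).ne'
      have hnotdvd : ¬ ℓ ∣ ordCompl[ℓ] (d p) := Nat.not_dvd_ordCompl hℓ (hdne0 p hp)
      have hroot : (cyclotomic (ordCompl[ℓ] (d p)) (Polynomial ℤ ⧸ M)).IsRoot x := by
        have hdp := (hd p hp).2
        rcases Nat.eq_zero_or_pos ((d p).factorization ℓ) with he | he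
        · rwa [show ordCompl[ℓ] (d p) = d p by rw [he]; simp]
        · have heq : d p = ℓ ^ ((d p).factorization ℓ) * ordCompl[ℓ] (d p) :=
            (Nat.ordProj_mul_ordCompl_eq_self (d p) ℓ).symm
          rw [heq, cyclotomic_mul_prime_pow_eq _ hnotdvd he] at hdp
          have hne2 : ℓ ^ ((d p).factorization ℓ) - ℓ ^ ((d p).factorization ℓ - 1) ≠ 0 := by
            have := Nat.pow_lt_pow_right hℓ.one_lt
              (show (d p).factorization ℓ - 1 < (d p).factorization ℓ by omega)
            omega
          simpa [Polynomial.IsRoot, Polynomial.eval_pow, pow_eq_zero_iff hne2] using hdp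
      haveI : NeZero ((ordCompl[ℓ] (d p) : ℕ) : Polynomial ℤ ⧸ M) := by
        refine ⟨fun h => hnotdvd ?_⟩
        exact (CharP.cast_eq_zero_iff (Polynomial ℤ ⧸ M) ℓ _).1 h
      exact Polynomial.isRoot_cyclotomic_iff.1 hroot
    have hDeq : ∀ p ∈ n.primeFactors, ordCompl[ℓ] (d p) = ordCompl[ℓ] (d p₀) :=
      fun p hp => (hroot' p hp).unique (hroot' p₀ hp₀)
    have hD0 : ordCompl[ℓ] (d p₀) ≠ 0 := (Nat.ordCompl_pos ℓ (hdne0 p₀ hp₀)).ne'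
    have hDfact : ∀ q ∈ n.primeFactors, q ≠ ℓ →
        (ordCompl[ℓ] (d p₀)).factorization q = n.factorization q := by
      intro q hq hqℓ
      rw [← hDeq q hq, Nat.factorization_ordCompl, Finsupp.erase_ne hqℓ]
      exact hdfact q hq
    by_cases hℓn : ℓ ∈ n.primeFactors
    · -- d ℓ = ℓ^(v_ℓ n) * D, and n ∣ d ℓ : contradiction
      have heq : d ℓ = ℓ ^ (n.factorization ℓ) * ordCompl[ℓ] (d p₀) := by
        rw [← hdfact ℓ hℓn, ← hDeq ℓ hℓn]
        exact (Nat.ordProj_mul_ordCompl_eq_self (d ℓ) ℓ).symm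
      have : n ∣ d ℓ := by
        refine n_dvd_of hn (hdne0 ℓ hℓn) ?_
        intro q hq
        rcases eq_or_ne q ℓ with heq' | hqℓ
        · rw [heq', hdfact ℓ hℓn]
        · rw [heq, Nat.factorization_mul (Nat.pow_pos hℓ.pos).ne' hD0]
          have h1 := hDfact q hq hqℓ
          have h2 : (ℓ ^ n.factorization ℓ).factorization q = 0 := by
            rw [Nat.Prime.factorization_pow hℓ, Finsupp.single_eq_of_ne' (Ne.symm hqℓ)]
          simp only [Finsupp.coe_add, Pi.add_apply]
          omega
      exact hdne ℓ hℓn (Nat.dvd_antisymm (hdvd ℓ hℓn) this)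
    · -- ℓ ∤ n, so d p = D for all p
      have hℓnotdvd : ¬ ℓ ∣ n := fun h => hℓn (Nat.mem_primeFactors.2 ⟨hℓ, h, hn0.ne'⟩)
      have hDeq' : ∀ p ∈ n.primeFactors, d p = ordCompl[ℓ] (d p₀) := by
        intro p hp
        rw [← hDeq p hp]
        have : (d p).factorization ℓ = 0 :=
          Nat.factorization_eq_zero_of_not_dvd (fun h => hℓnotdvd (h.trans (hdvd p hp)))
        rw [this]; simp
      have : n ∣ ordCompl[ℓ] (d p₀) := by
        refine n_dvd_of hn hD0 ?_
        intro q hq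
        rw [← hDeq' q hq, hdfact q hq]
      rw [← hDeq' p₀ hp₀] at this
      exact hdne p₀ hp₀ (Nat.dvd_antisymm (hdvd p₀ hp₀) this)
  · -- characteristic zero
    haveI : CharP (Polynomial ℤ ⧸ M) 0 := hc0 ▸ (ringChar.charP _)
    haveI : CharZero (Polynomial ℤ ⧸ M) := CharP.charP_to_charZero _
    have hroot' : ∀ p ∈ n.primeFactors, IsPrimitiveRoot x (d p) := by
      intro p hp
      haveI : NeZero ((d p : ℕ) : Polynomial ℤ ⧸ M) := ⟨Nat.cast_ne_zero.2 (hdne0 p hp)⟩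
      exact Polynomial.isRoot_cyclotomic_iff.1 (hd p hp).2
    have hDeq : ∀ p ∈ n.primeFactors, d p = d p₀ :=
      fun p hp => (hroot' p hp).unique (hroot' p₀ hp₀)
    have : n ∣ d p₀ := by
      refine n_dvd_of hn (hdne0 p₀ hp₀) ?_
      intro q hq
      rw [← hDeq q hq, hdfact q hq]
    exact hdne p₀ hp₀ (Nat.dvd_antisymm (hdvd p₀ hp₀) this)

lemma cyclotomic_mem_span {n : ℕ} (hn : 2 ≤ n) :
    cyclotomic n ℤ ∈ Ideal.span ((fun p => psi n p) '' ↑n.primeFactors) := by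
  have key : ∀ Q, Q ∈ Ideal.span ((fun p => hpoly n p) '' ↑n.primeFactors) →
      cyclotomic n ℤ * Q ∈ Ideal.span ((fun p => psi n p) '' ↑n.primeFactors) := by
    intro Q hQ
    induction hQ using Submodule.span_induction with
    | mem w hw =>
      obtain ⟨p, hp, rfl⟩ := hw
      have hp' := Finset.mem_coe.1 hp
      rw [cyclotomic_mul_hpoly' hn (Nat.prime_of_mem_primeFactors hp')
        (Nat.dvd_of_mem_primeFactors hp')]
      exact Ideal.subset_span ⟨p, hp, rfl⟩
    | zero => simp
    | add a b _ _ ha hb => rw [mul_add]; exact Ideal.add_mem _ ha hb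
    | smul a Q hQ ih =>
      rw [smul_eq_mul, mul_left_comm]
      exact Ideal.mul_mem_left _ _ ih
  have := key 1 (by rw [span_hpoly_eq_top hn]; trivial)
  simpa using this

lemma monic_B {n : ℕ} (hn : 2 ≤ n) : ((X : Polynomial ℤ) ^ n - 1).Monic := by
  have h : ((X : Polynomial ℤ) ^ n - 1) = X ^ n - C 1 := by simp
  rw [h]
  exact monic_X_pow_sub_C (1 : ℤ) (by omega)

lemma degree_B {n : ℕ} (hn : 2 ≤ n) : ((X : Polynomial ℤ) ^ n - 1).degree = (n : WithBot ℕ) := by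
  have h : ((X : Polynomial ℤ) ^ n - 1) = X ^ n - C 1 := by simp
  rw [h, degree_X_pow_sub_C (by omega)]

lemma X_pow_mul_psi {n p i : ℕ} :
    (X : Polynomial ℤ) ^ i * psi n p = ∑ t ∈ Finset.range p, (X : Polynomial ℤ) ^ (i + t * (n / p)) := by
  rw [psi, Finset.mul_sum]
  exact Finset.sum_congr rfl fun t _ => (pow_add _ _ _).symm

lemma degree_X_pow_mul_psi_lt {n p i : ℕ} (hpp : p.Prime) (hp : p ∣ n)
    (hi : i < n / p) : ((X : Polynomial ℤ) ^ i * psi n p).degree < (n : WithBot ℕ) := by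
  rw [X_pow_mul_psi]
  refine lt_of_le_of_lt (degree_sum_le _ _) ?_
  rw [Finset.sup_lt_iff (by exact_mod_cast WithBot.bot_lt_coe n)]
  intro t ht
  rw [degree_X_pow, Nat.cast_lt]
  have hmp : (n / p) * p = n := Nat.div_mul_cancel hp
  have ht' : t < p := Finset.mem_range.1 ht
  calc i + t * (n / p) < n / p + t * (n / p) := by omega
    _ = (t + 1) * (n / p) := by ring
    _ ≤ p * (n / p) := Nat.mul_le_mul_right _ (by omega)
    _ = n := by rw [mul_comm]; exact hmp

noncomputable def Wspan (n : ℕ) : Submodule ℤ (Polynomial ℤ) :=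
  Submodule.span ℤ {q : Polynomial ℤ | ∃ p i : ℕ, p.Prime ∧ p ∣ n ∧ i < n / p ∧
    q = (X : Polynomial ℤ) ^ i * psi n p}

lemma Wspan_degree_lt {n : ℕ} : Wspan n ≤ Polynomial.degreeLT ℤ n := by
  rw [Wspan, Submodule.span_le]
  rintro q ⟨p, i, hpp, hp, hi, rfl⟩
  rw [SetLike.mem_coe, Polynomial.mem_degreeLT]
  exact degree_X_pow_mul_psi_lt hpp hp hi

lemma Wspan_mod_self {n : ℕ} (hn : 2 ≤ n) {w : Polynomial ℤ} (hw : w ∈ Wspan n) :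
    w %ₘ ((X : Polynomial ℤ) ^ n - 1) = w := by
  rw [Polynomial.modByMonic_eq_self_iff (monic_B hn), degree_B hn]
  exact Polynomial.mem_degreeLT.1 (Wspan_degree_lt hw)

lemma X_mul_Wspan {n : ℕ} (hn : 2 ≤ n) {w : Polynomial ℤ} (hw : w ∈ Wspan n) :
    ((X : Polynomial ℤ) * w) %ₘ ((X : Polynomial ℤ) ^ n - 1) ∈ Wspan n := by
  induction hw using Submodule.span_induction with
  | mem q hq =>
    obtain ⟨p, i, hpp, hp, hi, rfl⟩ := hq
    have hgen : ∀ j : ℕ, j < n / p → (X : Polynomial ℤ) ^ j * psi n p ∈ Wspan n :=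
      fun j hj => Submodule.subset_span ⟨p, j, hpp, hp, hj, rfl⟩
    rcases lt_or_eq_of_le (Nat.succ_le_of_lt hi) with hi1 | hi1
    · rw [← mul_assoc, ← pow_succ']
      rw [Wspan_mod_self hn (hgen (i+1) hi1)]
      exact hgen (i+1) hi1
    · have hi1' : i + 1 = n / p := hi1
      have hkey : (X : Polynomial ℤ) ^ (i+1) * psi n p = psi n p + ((X : Polynomial ℤ) ^ n - 1) := by
        have h := psi_mul_eq (n := n) (p := p) hp
        rw [hi1']
        linear_combination h
      have hm0 : 0 < n / p := Nat.div_pos (Nat.le_of_dvd (by omega) hp) hpp.pos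
      have hpsiW : psi n p ∈ Wspan n := by simpa using hgen 0 hm0
      rw [← mul_assoc, ← pow_succ', hkey, Polynomial.add_modByMonic]
      have hB0 : ((X : Polynomial ℤ) ^ n - 1) %ₘ ((X : Polynomial ℤ) ^ n - 1) = 0 :=
        (Polynomial.modByMonic_eq_zero_iff_dvd (monic_B hn)).2 dvd_rfl
      rw [hB0, add_zero, Wspan_mod_self hn hpsiW]
      exact hpsiW
  | zero => simpa using (Wspan n).zero_mem
  | add a b ha hb iha ihb =>
    rw [mul_add, Polynomial.add_modByMonic]
    exact (Wspan n).add_mem iha ihb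
  | smul c a ha ih =>
    rw [mul_smul_comm, Polynomial.smul_modByMonic]
    exact (Wspan n).smul_mem c ih

lemma mod_eq_mod_of_dvd_sub {n : ℕ} (hn : 2 ≤ n) {Q₁ Q₂ : Polynomial ℤ}
    (h : ((X : Polynomial ℤ) ^ n - 1) ∣ (Q₁ - Q₂)) :
    Q₁ %ₘ ((X : Polynomial ℤ) ^ n - 1) = Q₂ %ₘ ((X : Polynomial ℤ) ^ n - 1) := by
  have h0 := (Polynomial.modByMonic_eq_zero_iff_dvd (monic_B hn)).2 h
  rw [Polynomial.sub_modByMonic, sub_eq_zero] at h0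
  exact h0

lemma X_mul_mod {n : ℕ} (hn : 2 ≤ n) {R : Polynomial ℤ}
    (h : R %ₘ ((X : Polynomial ℤ) ^ n - 1) ∈ Wspan n) :
    ((X : Polynomial ℤ) * R) %ₘ ((X : Polynomial ℤ) ^ n - 1) ∈ Wspan n := by
  have hdvd : ((X : Polynomial ℤ) ^ n - 1) ∣
      ((X : Polynomial ℤ) * R - X * (R %ₘ ((X : Polynomial ℤ) ^ n - 1))) := by
    rw [← mul_sub]
    refine Dvd.dvd.mul_left ?_ X
    exact ⟨R /ₘ ((X : Polynomial ℤ) ^ n - 1), by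
      rw [Polynomial.modByMonic_eq_sub_mul_div R ((X : Polynomial ℤ) ^ n - 1)]; ring⟩
  rw [mod_eq_mod_of_dvd_sub hn hdvd]
  exact X_mul_Wspan hn h

lemma mul_mod_mem {n : ℕ} (hn : 2 ≤ n) (a : Polynomial ℤ) {Q : Polynomial ℤ}
    (h : Q %ₘ ((X : Polynomial ℤ) ^ n - 1) ∈ Wspan n) :
    (a * Q) %ₘ ((X : Polynomial ℤ) ^ n - 1) ∈ Wspan n := by
  induction a using Polynomial.induction_on' with
  | add p q hp hq =>
    rw [add_mul, Polynomial.add_modByMonic]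
    exact (Wspan n).add_mem hp hq
  | monomial j c =>
    rw [← C_mul_X_pow_eq_monomial]
    induction j with
    | zero =>
      have : Polynomial.C c * (X : Polynomial ℤ) ^ 0 * Q = c • Q := by
        rw [Polynomial.smul_eq_C_mul]; ring
      rw [this, Polynomial.smul_modByMonic]
      exact (Wspan n).smul_mem c h
    | succ j ih =>
      have : Polynomial.C c * (X : Polynomial ℤ) ^ (j+1) * Q
          = X * (Polynomial.C c * X ^ j * Q) := by ring
      rw [this]
      exact X_mul_mod hn ih

lemma ideal_mod_mem {n : ℕ} (hn : 2 ≤ n) {Q : Polynomial ℤ}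
    (hQ : Q ∈ Ideal.span ((fun p => psi n p) '' ↑n.primeFactors)) :
    Q %ₘ ((X : Polynomial ℤ) ^ n - 1) ∈ Wspan n := by
  induction hQ using Submodule.span_induction with
  | mem q hq =>
    obtain ⟨p, hp, rfl⟩ := hq
    have hp' := Finset.mem_coe.1 hp
    have hpp := Nat.prime_of_mem_primeFactors hp'
    have hpd := Nat.dvd_of_mem_primeFactors hp'
    have hm0 : 0 < n / p := Nat.div_pos (Nat.le_of_dvd (by omega) hpd) hpp.pos
    have hpsiW : psi n p ∈ Wspan n := by
      have : (X : Polynomial ℤ) ^ 0 * psi n p ∈ Wspan n :=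
        Submodule.subset_span ⟨p, 0, hpp, hpd, hm0, rfl⟩
      simpa using this
    rw [Wspan_mod_self hn hpsiW]
    exact hpsiW
  | zero => simpa [Polynomial.zero_modByMonic] using (Wspan n).zero_mem
  | add a b ha hb iha ihb =>
    rw [Polynomial.add_modByMonic]
    exact (Wspan n).add_mem iha ihb
  | smul a Q hQ ih =>
    rw [smul_eq_mul]
    exact mul_mod_mem hn a ih

-- arithmetic indicator lemma
lemma indicator_sum {R : Type*} [AddCommMonoidWithOne R] {m p n : ℕ} (hm0 : 0 < m)
    (hmp : m * p = n) {i : ℕ} (hi : i < m) {k : ℕ} (hk : k < n) :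
    (if k % m = i then (1 : R) else 0) = ∑ t ∈ Finset.range p, if k = i + t * m then (1 : R) else 0 := by
  have hiff : ∀ t, (k = i + t * m ↔ (k % m = i ∧ t = k / m)) := by
    intro t
    constructor
    · rintro rfl
      refine ⟨by rw [Nat.add_mul_mod_self_right, Nat.mod_eq_of_lt hi], ?_⟩
      rw [Nat.add_mul_div_right _ _ hm0, Nat.div_eq_of_lt hi, zero_add]
    · rintro ⟨h1, rfl⟩
      rw [← h1, mul_comm]
      exact (Nat.mod_add_div k m).symm
  rw [Finset.sum_congr rfl (fun t _ => if_congr (hiff t) rfl rfl)]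
  by_cases hkm : k % m = i
  · rw [if_pos hkm]
    have hcong : ∀ t, (if k % m = i ∧ t = k / m then (1:R) else 0) = (if t = k / m then (1:R) else 0) :=
      fun t => by simp [hkm]
    rw [Finset.sum_congr rfl (fun t _ => hcong t)]
    rw [Finset.sum_ite_eq' (Finset.range p) (k / m) (fun _ => (1 : R))]
    rw [if_pos (Finset.mem_range.2 ((Nat.div_lt_iff_lt_mul hm0).2 (by rw [mul_comm]; omega)))]
  · simp [hkm]

lemma coeff_X_pow_mul_psi {n p i : ℕ} (hp : p ∣ n) (hm0 : 0 < n / p) (hi : i < n / p)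
    {k : ℕ} (hk : k < n) :
    ((X : Polynomial ℤ) ^ i * psi n p).coeff k = if k % (n / p) = i then 1 else 0 := by
  rw [X_pow_mul_psi, Polynomial.finset_sum_coeff]
  rw [indicator_sum hm0 (Nat.div_mul_cancel hp) hi hk]
  refine Finset.sum_congr rfl fun t _ => ?_
  rw [Polynomial.coeff_X_pow]

-- coefficient extraction map
noncomputable def Tmap (n : ℕ) : Polynomial ℤ →ₗ[ℤ] (Fin n → ℤ) :=
  LinearMap.pi (fun k : Fin n => Polynomial.lcoeff ℤ (k : ℕ))

lemma Tmap_gen {n p i : ℕ} (hp : p ∣ n) (hm0 : 0 < n / p) (hi : i < n / p) :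
    Tmap n ((X : Polynomial ℤ) ^ i * psi n p)
      = fun j : Fin n => if (j : ℕ) % (n / p) = i then (1 : ℤ) else 0 := by
  funext j
  exact coeff_X_pow_mul_psi hp hm0 hi j.isLt

noncomputable def phiMap (n : ℕ) : (Fin n → ℤ) →ₗ[ℤ] ℂ where
  toFun l := ∑ k : Fin n, (l k : ℂ) * Complex.exp (2 * Real.pi * Complex.I / n) ^ (k : ℕ)
  map_add' a b := by
    simp only [Pi.add_apply, Int.cast_add, add_mul]
    rw [Finset.sum_add_distrib]
  map_smul' c a := by
    simp only [Pi.smul_apply, smul_eq_mul, Int.cast_mul, RingHom.id_apply, zsmul_eq_mul,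
      Finset.mul_sum, mul_assoc]

noncomputable def Pl {n : ℕ} (l : Fin n → ℤ) : Polynomial ℤ :=
  ∑ k : Fin n, Polynomial.C (l k) * (X : Polynomial ℤ) ^ (k : ℕ)

lemma coeff_Pl {n : ℕ} (l : Fin n → ℤ) (k : Fin n) : (Pl l).coeff (k : ℕ) = l k := by
  rw [Pl, Polynomial.finset_sum_coeff]
  have h : ∀ j : Fin n, (Polynomial.C (l j) * (X : Polynomial ℤ) ^ (j : ℕ)).coeff (k : ℕ)
      = if j = k then l j else 0 := by
    intro j
    rw [Polynomial.coeff_C_mul, Polynomial.coeff_X_pow]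
    rcases eq_or_ne j k with rfl | hj
    · simp
    · rw [if_neg (fun hc => hj (Fin.ext hc.symm)), if_neg hj, mul_zero]
  rw [Finset.sum_congr rfl fun j _ => h j, Finset.sum_ite_eq' Finset.univ k (fun j => l j),
    if_pos (Finset.mem_univ k)]

lemma degree_Pl {n : ℕ} (hn : 2 ≤ n) (l : Fin n → ℤ) : (Pl l).degree < (n : WithBot ℕ) := by
  rw [Pl]
  refine lt_of_le_of_lt (Polynomial.degree_sum_le _ _) ?_
  rw [Finset.sup_lt_iff (by exact_mod_cast WithBot.bot_lt_coe n)]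
  intro k _
  refine lt_of_le_of_lt (Polynomial.degree_C_mul_X_pow_le _ _) ?_
  exact_mod_cast k.isLt

lemma aeval_Pl {n : ℕ} (l : Fin n → ℤ) :
    Polynomial.aeval (Complex.exp (2 * Real.pi * Complex.I / n)) (Pl l)
      = ∑ k : Fin n, (l k : ℂ) * Complex.exp (2 * Real.pi * Complex.I / n) ^ (k : ℕ) := by
  rw [Pl, map_sum]
  refine Finset.sum_congr rfl fun k _ => ?_
  simp [Polynomial.aeval_C]

theorem stmt_9 (n : ℕ) (hn : 2 ≤ n) :
    {l : Fin n → ℤ | ∑ k : Fin n, (l k : ℂ) *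
        Complex.exp (2 * Real.pi * Complex.I / n) ^ (k : ℕ) = 0} =
    ↑(Submodule.span ℤ
      {v : Fin n → ℤ | ∃ (p : ℕ) (i : ℕ), p.Prime ∧ p ∣ n ∧ i < n / p ∧
        v = fun j : Fin n => if (j : ℕ) % (n / p) = i then (1 : ℤ) else 0}) := by
  have hn0 : 0 < n := by omega
  have hprim : IsPrimitiveRoot (Complex.exp (2 * Real.pi * Complex.I / n)) n :=
    Complex.isPrimitiveRoot_exp n hn0.ne'
  set ω : ℂ := Complex.exp (2 * Real.pi * Complex.I / n) with hω
  ext l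
  simp only [Set.mem_setOf_eq, SetLike.mem_coe]
  constructor
  · -- hard direction
    intro h
    have haev : Polynomial.aeval ω (Pl l) = 0 := by rw [aeval_Pl]; exact h
    have hint : IsIntegral ℤ ω := by
      refine ⟨(X : Polynomial ℤ) ^ n - Polynomial.C 1, ?_, ?_⟩
      · exact Polynomial.monic_X_pow_sub_C _ hn0.ne'
      · have heval : Polynomial.eval₂ (algebraMap ℤ ℂ) ω ((X : Polynomial ℤ) ^ n - Polynomial.C 1)
            = ω ^ n - 1 := by simp
        rw [heval, hprim.pow_eq_one]; ring
    have hdvd : cyclotomic n ℤ ∣ Pl l := by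
      rw [Polynomial.cyclotomic_eq_minpoly hprim hn0]
      exact minpoly.isIntegrallyClosed_dvd hint haev
    obtain ⟨g, hg⟩ := hdvd
    have hPmem : Pl l ∈ Ideal.span ((fun p => psi n p) '' ↑n.primeFactors) := by
      rw [hg]
      exact Ideal.mul_mem_right g _ (cyclotomic_mem_span hn)
    have hW : Pl l ∈ Wspan n := by
      have := ideal_mod_mem hn hPmem
      rwa [(Polynomial.modByMonic_eq_self_iff (monic_B hn)).2
        (by rw [degree_B hn]; exact degree_Pl hn l)] at this
    have hl : Tmap n (Pl l) = l := funext fun k => coeff_Pl l k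
    rw [← hl]
    have hmap : Tmap n (Pl l) ∈ Submodule.map (Tmap n) (Wspan n) :=
      Submodule.mem_map_of_mem hW
    rw [Wspan, Submodule.map_span] at hmap
    refine Submodule.span_mono ?_ hmap
    rintro v ⟨q, ⟨p, i, hpp, hp, hi, rfl⟩, rfl⟩
    have hm0 : 0 < n / p := Nat.div_pos (Nat.le_of_dvd hn0 hp) hpp.pos
    exact ⟨p, i, hpp, hp, hi, (Tmap_gen hp hm0 hi)⟩
  · -- easy direction
    intro h
    have hker : Submodule.span ℤ
        {v : Fin n → ℤ | ∃ (p : ℕ) (i : ℕ), p.Prime ∧ p ∣ n ∧ i < n / p ∧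
          v = fun j : Fin n => if (j : ℕ) % (n / p) = i then (1 : ℤ) else 0}
        ≤ LinearMap.ker (phiMap n) := by
      rw [Submodule.span_le]
      rintro v ⟨p, i, hpp, hp, hi, rfl⟩
      rw [SetLike.mem_coe, LinearMap.mem_ker]
      have hm0 : 0 < n / p := Nat.div_pos (Nat.le_of_dvd hn0 hp) hpp.pos
      have hmp : (n / p) * p = n := Nat.div_mul_cancel hp
      show ∑ k : Fin n, (((if (k : ℕ) % (n / p) = i then (1:ℤ) else 0) : ℤ) : ℂ) * ω ^ (k : ℕ) = 0
      have hstep : ∀ k : Fin n,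
          (((if (k : ℕ) % (n / p) = i then (1:ℤ) else 0) : ℤ) : ℂ) * ω ^ (k : ℕ)
          = ∑ t ∈ Finset.range p, (if (k : ℕ) = i + t * (n / p) then (1:ℂ) else 0) * ω ^ (k : ℕ) := by
        intro k
        rw [← Finset.sum_mul]
        congr 1
        push_cast [apply_ite (Int.cast : ℤ → ℂ)]
        exact indicator_sum hm0 hmp hi k.isLt
      rw [Finset.sum_congr rfl fun k _ => hstep k, Finset.sum_comm]
      have hinner : ∀ t ∈ Finset.range p,
          ∑ k : Fin n, (if (k : ℕ) = i + t * (n / p) then (1:ℂ) else 0) * ω ^ (k : ℕ)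
          = ω ^ (i + t * (n / p)) := by
        intro t ht
        have hlt : i + t * (n / p) < n := by
          have ht' : t < p := Finset.mem_range.1 ht
          calc i + t * (n / p) < n / p + t * (n / p) := by omega
            _ = (t + 1) * (n / p) := by ring
            _ ≤ p * (n / p) := Nat.mul_le_mul_right _ (by omega)
            _ = n := by rw [mul_comm]; exact hmp
        rw [Finset.sum_eq_single_of_mem (⟨i + t * (n / p), hlt⟩ : Fin n) (Finset.mem_univ _)]
        · simp
        · intro b _ hb
          rw [if_neg (fun hc => hb (Fin.ext hc)), zero_mul]
      rw [Finset.sum_congr rfl hinner]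
      have hrw : ∀ t ∈ Finset.range p, ω ^ (i + t * (n / p)) = ω ^ i * (ω ^ (n / p)) ^ t := by
        intro t _
        rw [pow_add, mul_comm t, pow_mul]
      rw [Finset.sum_congr rfl hrw, ← Finset.mul_sum]
      have hzero : ∑ t ∈ Finset.range p, (ω ^ (n / p)) ^ t = 0 := by
        refine IsPrimitiveRoot.geom_sum_eq_zero ?_ hpp.one_lt
        exact hprim.pow hn0 (by rw [Nat.div_mul_cancel hp])
      rw [hzero, mul_zero]
    have := hker h
    rw [LinearMap.mem_ker] at this
    exact this
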